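/- arXiv:2104.10196 — 5 statements merged into one kernel-verified Lean document; each statement's English description precedes it below -/
import Mathlib

section
/- In the auxiliary-function setup, the convex envelope h agrees with f at every base point: for each i ∈ {0,…,T,*}, h(x_i) = f(x_i) and g_i ∈ ∂h(x_i) (where g_* = 0). -/
noncomputable section

/-- Subdifferential of `f` at `x`. -/
def SubdiffAt {n : ℕ} (f : EuclideanSpace ℝ (Fin n) → ℝ) (x : EuclideanSpace ℝ (Fin n)) :
    Set (EuclideanSpace ℝ (Fin n)) :=
  {g | ∀ y, f x + (inner ℝ g (y - x) : ℝ) ≤ f y}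

/-- `(L,η)`-Hölder smoothness of `f`. -/
def HolderSmooth {n : ℕ} (L η : ℝ) (f : EuclideanSpace ℝ (Fin n) → ℝ) : Prop :=
  ∀ x x' g g', g ∈ SubdiffAt f x → g' ∈ SubdiffAt f x' → ‖g - g'‖ ≤ L * ‖x - x'‖ ^ η

/-- The stepsize `γ = ‖g‖^((1-η)/η)/L^(1/η)` if `η > 0`, else `0`. -/
def gammaStep {n : ℕ} (L η : ℝ) (g : EuclideanSpace ℝ (Fin n)) : ℝ :=
  if 0 < η then ‖g‖ ^ ((1 - η) / η) / L ^ (1 / η) else 0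

/-- The Hölder-smooth upper model `h_k` anchored at `c` with value `fc` and slope `g`. -/
def hModel {n : ℕ} (L η : ℝ) (c g : EuclideanSpace ℝ (Fin n)) (fc : ℝ)
    (y : EuclideanSpace ℝ (Fin n)) : ℝ :=
  fc + (inner ℝ g (y - c) : ℝ) + (L / (η + 1)) * ‖y - c‖ ^ (η + 1)

/-- `m(y) = min{h_k(y) : k ∈ {0,…,T,*}}` with `g_* = 0`. -/
def auxMin {n : ℕ} (L η : ℝ) (T : ℕ) (x g : ℕ → EuclideanSpace ℝ (Fin n))
    (f : EuclideanSpace ℝ (Fin n) → ℝ) (xs : EuclideanSpace ℝ (Fin n))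
    (y : EuclideanSpace ℝ (Fin n)) : ℝ :=
  min ((Finset.range (T + 1)).inf' (by simp) fun k => hModel L η (x k) (g k) (f (x k)) y)
      (hModel L η xs 0 (f xs) y)

/-- Convex envelope: pointwise supremum of all affine minorants of `m`. -/
def convEnvelope {n : ℕ} (m : EuclideanSpace ℝ (Fin n) → ℝ)
    (x : EuclideanSpace ℝ (Fin n)) : ℝ :=
  sSup {v | ∃ (g : EuclideanSpace ℝ (Fin n)) (b : ℝ),
    (∀ y, (inner ℝ g y : ℝ) + b ≤ m y) ∧ v = (inner ℝ g x : ℝ) + b}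

set_option maxHeartbeats 1000000

lemma exists_subgradient {n : ℕ} (f : EuclideanSpace ℝ (Fin n) → ℝ)
    (hconv : ConvexOn ℝ Set.univ f) (z : EuclideanSpace ℝ (Fin n)) :
    ∃ gz, gz ∈ SubdiffAt f z := by
  have hcont : Continuous f := by
    rw [← continuousOn_univ]
    exact hconv.continuousOn isOpen_univ
  set S : Set ((EuclideanSpace ℝ (Fin n)) × ℝ) := {p | f p.1 < p.2} with hS
  have hSopen : IsOpen S := isOpen_lt (hcont.comp continuous_fst) continuous_snd
  have hSconv : Convex ℝ S := by
    intro p hp q hq a b ha hb hab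
    simp only [hS, Set.mem_setOf_eq] at *
    have h1 : f (a • p.1 + b • q.1) ≤ a * f p.1 + b * f q.1 :=
      hconv.2 trivial trivial ha hb hab
    have h2 : a * f p.1 ≤ a * p.2 := mul_le_mul_of_nonneg_left hp.le ha
    have h3 : b * f q.1 ≤ b * q.2 := mul_le_mul_of_nonneg_left hq.le hb
    rcases eq_or_lt_of_le ha with ha' | ha'
    · have hb' : b = 1 := by linarith
      have : (a • p + b • q).1 = a • p.1 + b • q.1 := rfl
      have h4 : b * f q.1 < b * q.2 := by rw [hb']; simpa using hq
      calc f (a • p + b • q).1 = f (a • p.1 + b • q.1) := rfl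
        _ ≤ a * f p.1 + b * f q.1 := h1
        _ < a * p.2 + b * q.2 := by linarith
    · have h4 : a * f p.1 < a * p.2 := mul_lt_mul_of_pos_left hp ha'
      calc f (a • p + b • q).1 = f (a • p.1 + b • q.1) := rfl
        _ ≤ a * f p.1 + b * f q.1 := h1
        _ < a * p.2 + b * q.2 := by linarith
  have hzmem : (z, f z) ∉ S := by simp [hS]
  obtain ⟨ℓ, hℓ⟩ := geometric_hahn_banach_open_point hSconv hSopen hzmem
  set c : ℝ := ℓ (0, 1) with hc
  have hsplit : ∀ (y : EuclideanSpace ℝ (Fin n)) (t : ℝ), ℓ (y, t) = ℓ (y, 0) + t * c := by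
    intro y t
    have : (y, t) = (y, (0:ℝ)) + t • ((0 : EuclideanSpace ℝ (Fin n)), (1:ℝ)) := by
      simp [Prod.ext_iff]
    rw [this, map_add, map_smul]
    simp [hc, smul_eq_mul]
  have hcneg : c < 0 := by
    have h1 : ℓ (z, f z + 1) < ℓ (z, f z) := hℓ _ (by simp [hS])
    rw [hsplit z (f z + 1), hsplit z (f z)] at h1
    linarith
  have key : ∀ y, ℓ (y, 0) + f y * c ≤ ℓ (z, 0) + f z * c := by
    intro y
    by_contra hlt
    push_neg at hlt
    set δ : ℝ := (ℓ (y, 0) + f y * c) - (ℓ (z, 0) + f z * c) with hδ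
    have hδpos : 0 < δ := by simp only [hδ]; linarith
    have hεpos : 0 < δ / (-c) := div_pos hδpos (by linarith)
    have hmem : (y, f y + δ / (-c)) ∈ S := by simp [hS, hεpos]
    have := hℓ _ hmem
    rw [hsplit y (f y + δ / (-c)), hsplit z (f z)] at this
    have hne : -c ≠ 0 := by linarith
    have : δ / (-c) * c = -δ := by field_simp; simp [div_self (show c ≠ 0 by linarith)]
    nlinarith [hℓ _ hmem, hsplit y (f y + δ / (-c)), hsplit z (f z)]
  set A : (EuclideanSpace ℝ (Fin n)) →L[ℝ] ℝ :=
    ℓ.comp (ContinuousLinearMap.inl ℝ (EuclideanSpace ℝ (Fin n)) ℝ) with hA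
  have hAapp : ∀ y, A y = ℓ (y, 0) := fun y => rfl
  refine ⟨(-c)⁻¹ • (InnerProductSpace.toDual ℝ (EuclideanSpace ℝ (Fin n))).symm A, ?_⟩
  intro y
  have hinner : (inner ℝ ((-c)⁻¹ • (InnerProductSpace.toDual ℝ (EuclideanSpace ℝ (Fin n))).symm A)
      (y - z) : ℝ) = (-c)⁻¹ * A (y - z) := by
    rw [real_inner_smul_left, InnerProductSpace.toDual_symm_apply]
  rw [hinner]
  have hAsub : A (y - z) = ℓ (y, 0) - ℓ (z, 0) := by
    rw [map_sub, hAapp, hAapp]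
  have hk := key y
  have hcpos : 0 < -c := by linarith
  rw [hAsub]
  have h2 : (-c)⁻¹ * (ℓ (y, 0) - ℓ (z, 0)) ≤ f y - f z := by
    rw [inv_mul_le_iff₀ hcpos]
    nlinarith
  linarith

lemma rpow_sum_bound (η : ℝ) (hη0 : 0 ≤ η) (N : ℕ) :
    (η + 1) * ∑ i ∈ Finset.range N, ((i : ℝ) + 1) ^ η ≤ ((N : ℝ) + 1) ^ (η + 1) - 1 := by
  have key : ∀ i : ℕ, (η + 1) * ((i : ℝ) + 1) ^ η ≤
      (((i : ℝ) + 1) + 1) ^ (η + 1) - ((i : ℝ) + 1) ^ (η + 1) := by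
    intro i
    set j : ℝ := (i : ℝ) + 1 with hj
    have hjpos : 0 < j := by positivity
    have hjne : j ≠ 0 := ne_of_gt hjpos
    have hbern : 1 + (η + 1) * (1 / j) ≤ (1 + 1 / j) ^ (η + 1) :=
      one_add_mul_self_le_rpow_one_add (le_trans (by norm_num) (by positivity : (0:ℝ) ≤ 1 / j)) (by linarith)
    have hmul : (1 + (η + 1) * (1 / j)) * j ^ (η + 1) ≤ (1 + 1 / j) ^ (η + 1) * j ^ (η + 1) :=
      mul_le_mul_of_nonneg_right hbern (Real.rpow_nonneg hjpos.le _)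
    have h1 : (1 + 1 / j) ^ (η + 1) * j ^ (η + 1) = (j + 1) ^ (η + 1) := by
      rw [← Real.mul_rpow (by positivity) hjpos.le]
      congr 1
      field_simp
    have h2 : (1 + (η + 1) * (1 / j)) * j ^ (η + 1) =
        j ^ (η + 1) + (η + 1) * j ^ η := by
      rw [Real.rpow_add_one hjne]
      field_simp
    rw [h1, h2] at hmul
    linarith
  have hsum : (η + 1) * ∑ i ∈ Finset.range N, ((i : ℝ) + 1) ^ η =
      ∑ i ∈ Finset.range N, (η + 1) * ((i : ℝ) + 1) ^ η := Finset.mul_sum _ _ _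
  rw [hsum]
  have htel := Finset.sum_range_sub (fun j => ((j : ℝ) + 1) ^ (η + 1)) N
  simp only [Nat.cast_zero, zero_add, Real.one_rpow] at htel
  have hle : ∑ i ∈ Finset.range N, (η + 1) * ((i : ℝ) + 1) ^ η ≤
      ∑ i ∈ Finset.range N, ((((i + 1 : ℕ) : ℝ) + 1) ^ (η + 1) - ((i : ℝ) + 1) ^ (η + 1)) := by
    apply Finset.sum_le_sum
    intro i _
    have := key i
    push_cast
    push_cast at this
    linarith
  rw [htel] at hle
  exact hle

lemma descent_lemma {n : ℕ} (f : EuclideanSpace ℝ (Fin n) → ℝ) (L η : ℝ)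
    (hconv : ConvexOn ℝ Set.univ f) (hL : 0 < L) (hη0 : 0 ≤ η)
    (hsmooth : HolderSmooth L η f) {x gx : EuclideanSpace ℝ (Fin n)}
    (hg : gx ∈ SubdiffAt f x) (y : EuclideanSpace ℝ (Fin n)) :
    f y ≤ f x + (inner ℝ gx (y - x) : ℝ) + L / (η + 1) * ‖y - x‖ ^ (η + 1) := by
  have hp1 : (0 : ℝ) < η + 1 := by linarith
  by_cases hyx : y = x
  · subst hyx
    simp [Real.zero_rpow (ne_of_gt hp1)]
  set d : EuclideanSpace ℝ (Fin n) := y - x with hd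
  set D : ℝ := ‖d‖ with hD
  have hDpos : 0 < D := by
    rw [hD, hd, norm_pos_iff]
    exact sub_ne_zero_of_ne hyx
  choose gsel hgsel using fun z => exists_subgradient f hconv z
  -- main estimate for each N ≥ 1
  have main : ∀ N : ℕ, 1 ≤ N → f y ≤ f x + (inner ℝ gx d : ℝ) +
      L * D ^ (η + 1) * ((((N : ℝ) + 1) ^ (η + 1) - 1) / ((η + 1) * (N : ℝ) ^ (η + 1))) := by
    intro N hN
    have hNpos : (0 : ℝ) < (N : ℝ) := by exact_mod_cast hN
    have hNne : (N : ℝ) ≠ 0 := ne_of_gt hNpos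
    set F : ℕ → ℝ := fun j => f (x + ((j : ℝ) / (N : ℝ)) • d) with hF
    have hF0 : F 0 = f x := by simp [hF]
    have hFN : F N = f y := by
      simp only [hF, div_self hNne, one_smul, hd]
      congr 1
      abel
    have htel : ∑ i ∈ Finset.range N, (F (i + 1) - F i) = f y - f x := by
      rw [Finset.sum_range_sub F N, hF0, hFN]
    have hterm : ∀ i : ℕ, F (i + 1) - F i ≤
        (1 / (N : ℝ)) * ((inner ℝ gx d : ℝ) + L * (((i : ℝ) + 1) / (N : ℝ)) ^ η * D ^ (η + 1)) := by
      intro i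
      set t : ℝ := ((i : ℝ) + 1) / (N : ℝ) with ht
      have htpos : 0 < t := by positivity
      set z : EuclideanSpace ℝ (Fin n) := x + t • d with hz
      set w : EuclideanSpace ℝ (Fin n) := x + ((i : ℝ) / (N : ℝ)) • d with hw
      have hsubz := hgsel z
      have h1 : f z + (inner ℝ (gsel z) (w - z) : ℝ) ≤ f w := hsubz w
      have hwz : w - z = (-(1 / (N : ℝ))) • d := by
        rw [hw, hz, add_sub_add_left_eq_sub, ← sub_smul, ht]
        congr 1
        rw [div_sub_div_same]
        ring
      have h2 : (inner ℝ (gsel z) (w - z) : ℝ) = -(1 / (N : ℝ)) * (inner ℝ (gsel z) d : ℝ) := by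
        rw [hwz, real_inner_smul_right]
      have h3 : (inner ℝ (gsel z) d : ℝ) ≤ (inner ℝ gx d : ℝ) + L * t ^ η * D ^ η * D := by
        have hdiff : (inner ℝ (gsel z) d : ℝ) - (inner ℝ gx d : ℝ) = (inner ℝ (gsel z - gx) d : ℝ) := by
          rw [inner_sub_left]
        have hcs : (inner ℝ (gsel z - gx) d : ℝ) ≤ ‖gsel z - gx‖ * ‖d‖ := real_inner_le_norm _ _
        have hhs : ‖gsel z - gx‖ ≤ L * ‖z - x‖ ^ η :=
          hsmooth z x (gsel z) gx (hgsel z) hg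
        have hzx : ‖z - x‖ = t * D := by
          rw [hz, add_sub_cancel_left, norm_smul, Real.norm_eq_abs, abs_of_pos htpos, hD]
        have hzxp : ‖z - x‖ ^ η = t ^ η * D ^ η := by
          rw [hzx, Real.mul_rpow htpos.le (norm_nonneg _)]
        have h5 : ‖gsel z - gx‖ * ‖d‖ ≤ L * (t ^ η * D ^ η) * D := by
          have h6 : ‖gsel z - gx‖ ≤ L * (t ^ η * D ^ η) := by rw [← hzxp]; exact hhs
          have := mul_le_mul_of_nonneg_right h6 (norm_nonneg d)
          rw [← hD]
          linarith [this]
        rw [← hD] at hcs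
        nlinarith [hcs, hdiff, h5]
      have hDD : D ^ η * D = D ^ (η + 1) := (Real.rpow_add_one (ne_of_gt hDpos) η).symm
      have : F (i + 1) - F i ≤ (1 / (N : ℝ)) * (inner ℝ (gsel z) d : ℝ) := by
        have hcast : ((i + 1 : ℕ) : ℝ) = (i : ℝ) + 1 := by push_cast; ring
        have : F (i + 1) = f z := by
          simp only [hF, hcast, hz, ht]
        rw [this]
        have hwF : F i = f w := rfl
        rw [hwF]
        rw [h2] at h1
        linarith
      calc F (i + 1) - F i ≤ (1 / (N : ℝ)) * (inner ℝ (gsel z) d : ℝ) := this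
        _ ≤ (1 / (N : ℝ)) * ((inner ℝ gx d : ℝ) + L * t ^ η * D ^ (η + 1)) := by
            apply mul_le_mul_of_nonneg_left _ (by positivity)
            rw [← hDD]
            nlinarith [h3]
    have hsum : f y - f x ≤ (inner ℝ gx d : ℝ) +
        (L * D ^ (η + 1) / (N : ℝ)) * ∑ i ∈ Finset.range N, (((i : ℝ) + 1) / (N : ℝ)) ^ η := by
      rw [← htel]
      calc ∑ i ∈ Finset.range N, (F (i + 1) - F i)
          ≤ ∑ i ∈ Finset.range N, ((1 / (N : ℝ)) * (inner ℝ gx d : ℝ) +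
            (L * D ^ (η + 1) / (N : ℝ)) * (((i : ℝ) + 1) / (N : ℝ)) ^ η) :=
            Finset.sum_le_sum fun i _ => le_of_le_of_eq (hterm i) (by ring)
        _ = (inner ℝ gx d : ℝ) + (L * D ^ (η + 1) / (N : ℝ)) *
            ∑ i ∈ Finset.range N, (((i : ℝ) + 1) / (N : ℝ)) ^ η := by
            rw [Finset.sum_add_distrib, Finset.sum_const, Finset.card_range,
              ← Finset.mul_sum, nsmul_eq_mul]
            field_simp
    -- bound the sum
    have hsumdiv : ∑ i ∈ Finset.range N, (((i : ℝ) + 1) / (N : ℝ)) ^ η =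
        (∑ i ∈ Finset.range N, ((i : ℝ) + 1) ^ η) / (N : ℝ) ^ η := by
      rw [Finset.sum_div]
      exact Finset.sum_congr rfl fun i _ => Real.div_rpow (by positivity) hNpos.le η
    have hb := rpow_sum_bound η hη0 N
    have hNeta : (0 : ℝ) < (N : ℝ) ^ η := Real.rpow_pos_of_pos hNpos η
    have hNp : (N : ℝ) ^ (η + 1) = (N : ℝ) ^ η * (N : ℝ) := Real.rpow_add_one hNne η
    have hfin : (L * D ^ (η + 1) / (N : ℝ)) * ∑ i ∈ Finset.range N, (((i : ℝ) + 1) / (N : ℝ)) ^ η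
        ≤ L * D ^ (η + 1) * ((((N : ℝ) + 1) ^ (η + 1) - 1) / ((η + 1) * (N : ℝ) ^ (η + 1))) := by
      rw [hsumdiv, hNp]
      have hDp : (0 : ℝ) < D ^ (η + 1) := Real.rpow_pos_of_pos hDpos _
      have hs : ∑ i ∈ Finset.range N, ((i : ℝ) + 1) ^ η ≤
          ((((N : ℝ) + 1) ^ (η + 1) - 1)) / (η + 1) := by
        rw [le_div_iff₀ hp1, mul_comm]
        exact hb
      calc L * D ^ (η + 1) / (N : ℝ) * ((∑ i ∈ Finset.range N, ((i : ℝ) + 1) ^ η) / (N : ℝ) ^ η)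
          = (L * D ^ (η + 1) / ((N : ℝ) ^ η * (N : ℝ))) * ∑ i ∈ Finset.range N, ((i : ℝ) + 1) ^ η := by
            ring
        _ ≤ (L * D ^ (η + 1) / ((N : ℝ) ^ η * (N : ℝ))) * (((((N : ℝ) + 1) ^ (η + 1) - 1)) / (η + 1)) := by
            apply mul_le_mul_of_nonneg_left hs (by positivity)
        _ = L * D ^ (η + 1) * ((((N : ℝ) + 1) ^ (η + 1) - 1) / ((η + 1) * ((N : ℝ) ^ η * (N : ℝ)))) := by
            simp only [div_eq_mul_inv, mul_inv]
            ring
    linarith [hsum, hfin]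
  -- take the limit N → ∞
  have hφ : Filter.Tendsto (fun N : ℕ => f x + (inner ℝ gx d : ℝ) +
      L * D ^ (η + 1) * (((1 + 1 / (N : ℝ)) ^ (η + 1) - (1 / (N : ℝ)) ^ (η + 1)) * (η + 1)⁻¹))
      Filter.atTop
      (nhds (f x + (inner ℝ gx d : ℝ) + L * D ^ (η + 1) * ((1 - 0) * (η + 1)⁻¹))) := by
    have h1n : Filter.Tendsto (fun N : ℕ => 1 / (N : ℝ)) Filter.atTop (nhds 0) :=
      tendsto_one_div_atTop_nhds_zero_nat
    have ha : Filter.Tendsto (fun N : ℕ => (1 + 1 / (N : ℝ)) ^ (η + 1)) Filter.atTop (nhds 1) := by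
      have hc : ContinuousAt (fun s : ℝ => s ^ (η + 1)) 1 :=
        Real.continuousAt_rpow_const 1 (η + 1) (Or.inl one_ne_zero)
      have := hc.tendsto.comp (by simpa using tendsto_const_nhds.add h1n :
        Filter.Tendsto (fun N : ℕ => 1 + 1 / (N : ℝ)) Filter.atTop (nhds 1))
      simpa [Real.one_rpow, Function.comp_def] using this
    have hb : Filter.Tendsto (fun N : ℕ => (1 / (N : ℝ)) ^ (η + 1)) Filter.atTop (nhds 0) := by
      have hc : ContinuousAt (fun s : ℝ => s ^ (η + 1)) 0 :=
        Real.continuousAt_rpow_const 0 (η + 1) (Or.inr (by linarith))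
      have := hc.tendsto.comp h1n
      simpa [Real.zero_rpow (ne_of_gt hp1), Function.comp_def] using this
    exact tendsto_const_nhds.add (((ha.sub hb).mul_const _).const_mul _)
  have hev : ∀ᶠ N : ℕ in Filter.atTop, f y ≤ f x + (inner ℝ gx d : ℝ) +
      L * D ^ (η + 1) * (((1 + 1 / (N : ℝ)) ^ (η + 1) - (1 / (N : ℝ)) ^ (η + 1)) * (η + 1)⁻¹) := by
    filter_upwards [Filter.eventually_ge_atTop 1] with N hN
    have hNpos : (0 : ℝ) < (N : ℝ) := by exact_mod_cast hN
    have heq : ((((N : ℝ) + 1) ^ (η + 1) - 1) / ((η + 1) * (N : ℝ) ^ (η + 1))) =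
        ((1 + 1 / (N : ℝ)) ^ (η + 1) - (1 / (N : ℝ)) ^ (η + 1)) * (η + 1)⁻¹ := by
      have e1 : (1 + 1 / (N : ℝ)) ^ (η + 1) = ((N : ℝ) + 1) ^ (η + 1) / (N : ℝ) ^ (η + 1) := by
        rw [← Real.div_rpow (by positivity) hNpos.le]
        congr 1
        field_simp
      have e2 : (1 / (N : ℝ)) ^ (η + 1) = 1 / (N : ℝ) ^ (η + 1) := by
        rw [one_div, Real.inv_rpow hNpos.le, one_div]
      rw [e1, e2, ← sub_div, ← div_eq_mul_inv, div_div, mul_comm ((N : ℝ) ^ (η + 1))]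
    rw [← heq]
    exact main N hN
  have hlim := ge_of_tendsto hφ hev
  have heq2 : f x + (inner ℝ gx d : ℝ) + L * D ^ (η + 1) * ((1 - 0) * (η + 1)⁻¹) =
      f x + (inner ℝ gx d : ℝ) + L / (η + 1) * D ^ (η + 1) := by ring
  rw [heq2] at hlim
  exact hlim

lemma hModel_self {n : ℕ} (L η : ℝ) (hη : 0 < η + 1) (c g : EuclideanSpace ℝ (Fin n)) (fc : ℝ) :
    hModel L η c g fc c = fc := by
  simp [hModel, sub_self, Real.zero_rpow (ne_of_gt hη)]

lemma env_base {n : ℕ} (f m : EuclideanSpace ℝ (Fin n) → ℝ)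
    (p gp : EuclideanSpace ℝ (Fin n)) (hgp : gp ∈ SubdiffAt f p)
    (hfm : ∀ y, f y ≤ m y) (hmp : m p ≤ f p) :
    convEnvelope m p = f p ∧ gp ∈ SubdiffAt (convEnvelope m) p := by
  set S : EuclideanSpace ℝ (Fin n) → Set ℝ := fun y => {v | ∃ (g : EuclideanSpace ℝ (Fin n)) (b : ℝ),
    (∀ y', (inner ℝ g y' : ℝ) + b ≤ m y') ∧ v = (inner ℝ g y : ℝ) + b} with hSdef
  have hbdd : ∀ y, BddAbove (S y) := by
    rintro y
    refine ⟨m y, ?_⟩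
    rintro v ⟨gg, b, hle, rfl⟩
    exact hle y
  have hmem : ∀ y, ((inner ℝ gp y : ℝ) + (f p - (inner ℝ gp p : ℝ))) ∈ S y := by
    intro y
    refine ⟨gp, f p - (inner ℝ gp p : ℝ), ?_, rfl⟩
    intro y'
    have h1 := hgp y'
    rw [inner_sub_right] at h1
    have h2 := hfm y'
    linarith
  have hvalp : (inner ℝ gp p : ℝ) + (f p - (inner ℝ gp p : ℝ)) = f p := by ring
  have henv : convEnvelope m p = f p := by
    apply le_antisymm
    · apply csSup_le ⟨_, hmem p⟩
      rintro v ⟨gg, b, hle, rfl⟩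
      exact (hle p).trans hmp
    · have := le_csSup (hbdd p) (hmem p)
      rw [hvalp] at this
      exact this
  refine ⟨henv, ?_⟩
  intro y
  rw [henv]
  have := le_csSup (hbdd y) (hmem y)
  have hsplit : (inner ℝ gp (y - p) : ℝ) = (inner ℝ gp y : ℝ) - (inner ℝ gp p : ℝ) :=
    inner_sub_right _ _ _
  have hgoal : f p + (inner ℝ gp (y - p) : ℝ) = (inner ℝ gp y : ℝ) + (f p - (inner ℝ gp p : ℝ)) := by
    rw [hsplit]; ring
  rw [hgoal]
  exact this

/-- the convex envelope agrees with `f` at every base point (Lemma 1). -/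
theorem envelope_agreement {n : ℕ} (f : EuclideanSpace ℝ (Fin n) → ℝ) (L η : ℝ) (T : ℕ)
    (x g : ℕ → EuclideanSpace ℝ (Fin n)) (xs : EuclideanSpace ℝ (Fin n))
    (h : EuclideanSpace ℝ (Fin n) → ℝ)
    (hconv : ConvexOn ℝ Set.univ f)
    (hL : 0 < L) (hη0 : 0 ≤ η) (hη1 : η ≤ 1)
    (hsmooth : HolderSmooth L η f)
    (hsub : ∀ k ≤ T, g k ∈ SubdiffAt f (x k))
    (hmin : ∀ y, f xs ≤ f y)
    (hsubstar : (0 : EuclideanSpace ℝ (Fin n)) ∈ SubdiffAt f xs)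
    (hh : h = convEnvelope (auxMin L η T x g f xs)) :
    (∀ k ≤ T, h (x k) = f (x k) ∧ g k ∈ SubdiffAt h (x k)) ∧
    h xs = f xs ∧ (0 : EuclideanSpace ℝ (Fin n)) ∈ SubdiffAt h xs := by
  have hp1 : (0 : ℝ) < η + 1 := by linarith
  set m : EuclideanSpace ℝ (Fin n) → ℝ := auxMin L η T x g f xs with hm
  subst hh
  -- f is below every model
  have hfm : ∀ y, f y ≤ m y := by
    intro y
    rw [hm]
    unfold auxMin
    apply le_min
    · apply Finset.le_inf'
      intro k hk
      rw [Finset.mem_range] at hk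
      have hk' : k ≤ T := by omega
      exact descent_lemma f L η hconv hL hη0 hsmooth (hsub k hk') y
    · exact descent_lemma f L η hconv hL hη0 hsmooth hsubstar y
  -- m is below f at each base point
  have hmk : ∀ k ≤ T, m (x k) ≤ f (x k) := by
    intro k hk
    rw [hm]
    unfold auxMin
    refine min_le_of_left_le ?_
    have hmem : k ∈ Finset.range (T + 1) := Finset.mem_range.mpr (by omega)
    have := Finset.inf'_le (f := fun j => hModel L η (x j) (g j) (f (x j)) (x k)) hmem
    rw [hModel_self L η hp1] at this
    exact this
  have hms : m xs ≤ f xs := by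
    rw [hm]
    unfold auxMin
    refine min_le_of_right_le ?_
    rw [hModel_self L η hp1]
  constructor
  · intro k hk
    exact env_base f m (x k) (g k) (hsub k hk) hfm (hmk k hk)
  · exact env_base f m xs 0 hsubstar hfm hms

end
end

section
/- Let f : ℝⁿ → ℝ be convex and (L,η)-Hölder smooth with L > 0 and η ∈ (0,1]. Then for every x ∈ ℝⁿ, every g ∈ ∂f(x), and every g' ∈ ℝⁿ, the Fenchel conjugate satisfies f*(g') ≥ f*(g) + ⟨x, g' − g⟩ + (η/((η+1)L^{1/η}))‖g' − g‖^{(η+1)/η}, where f*(g) = ⟨g, x⟩ − f(x) is finite. -/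
noncomputable section

/-- The Fenchel conjugate of `f`, valued in `EReal`. -/
def fenchel {n : ℕ} (f : EuclideanSpace ℝ (Fin n) → ℝ) (g : EuclideanSpace ℝ (Fin n)) : EReal :=
  ⨆ z, (((inner ℝ g z : ℝ) - f z : ℝ) : EReal)

lemma subdiff_nonempty {n : ℕ} (f : EuclideanSpace ℝ (Fin n) → ℝ)
    (hconv : ConvexOn ℝ Set.univ f) (z : EuclideanSpace ℝ (Fin n)) :
    ∃ g, g ∈ SubdiffAt f z := by
  have hcont : Continuous f := hconv.locallyLipschitz.continuous
  set S : Set (EuclideanSpace ℝ (Fin n) × ℝ) := {p | f p.1 < p.2} with hS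
  have hSopen : IsOpen S := isOpen_lt (hcont.comp continuous_fst) continuous_snd
  have hSconv : Convex ℝ S := by
    have := hconv.convex_strict_epigraph
    simpa using this
  have hznot : (z, f z) ∉ S := by simp [hS]
  obtain ⟨ℓ, hℓ⟩ := geometric_hahn_banach_open_point hSconv hSopen hznot
  set c : ℝ := ℓ (0, 1) with hc
  have hkey : ∀ (y : EuclideanSpace ℝ (Fin n)) (t : ℝ), f y < t →
      ℓ (y, f y) + (t - f y) * c < ℓ (z, f z) := by
    intro y t ht
    have h1 : ((y, t) : EuclideanSpace ℝ (Fin n) × ℝ)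
        = (y, f y) + (t - f y) • ((0 : EuclideanSpace ℝ (Fin n)), (1 : ℝ)) := by
      simp [Prod.ext_iff]
    have := hℓ (y, t) ht
    rwa [h1, map_add, map_smul, smul_eq_mul] at this
  have hcneg : c < 0 := by
    have := hkey z (f z + 1) (by linarith)
    simpa using this
  have hc' : (0:ℝ) < -c := by linarith
  have hc0 : c ≠ 0 := ne_of_lt hcneg
  have hle : ∀ y : EuclideanSpace ℝ (Fin n), ℓ (y, f y) ≤ ℓ (z, f z) := by
    intro y
    refine le_of_forall_pos_le_add fun ε hε => ?_
    have := hkey y (f y + ε / (-c)) (by nlinarith [div_pos hε hc'])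
    have h2 : (f y + ε / (-c) - f y) * c = -ε := by
      field_simp
      ring
    nlinarith [this]
  set ℓ₁ : EuclideanSpace ℝ (Fin n) →L[ℝ] ℝ
    := ℓ.comp (ContinuousLinearMap.inl ℝ (EuclideanSpace ℝ (Fin n)) ℝ) with hℓ₁
  have hsplit : ∀ (y : EuclideanSpace ℝ (Fin n)) (t : ℝ), ℓ (y, t) = ℓ₁ y + t * c := by
    intro y t
    have h1 : ((y, t) : EuclideanSpace ℝ (Fin n) × ℝ)
        = (y, 0) + t • ((0 : EuclideanSpace ℝ (Fin n)), (1 : ℝ)) := by simp [Prod.ext_iff]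
    rw [h1, map_add, map_smul, smul_eq_mul]
    rfl
  refine ⟨(InnerProductSpace.toDual ℝ _).symm ((-c)⁻¹ • ℓ₁), fun y => ?_⟩
  have h3 : (inner ℝ ((InnerProductSpace.toDual ℝ _).symm ((-c)⁻¹ • ℓ₁)) (y - z) : ℝ)
      = (-c)⁻¹ * (ℓ₁ y - ℓ₁ z) := by
    rw [InnerProductSpace.toDual_symm_apply]
    simp [mul_sub]
  have h4 := hle y
  rw [hsplit y, hsplit z] at h4
  rw [h3]
  have h5 : (-c)⁻¹ * (ℓ₁ y - ℓ₁ z) ≤ f y - f z := by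
    rw [inv_mul_le_iff₀ hc']
    nlinarith
  linarith

open Finset in
lemma bern_sum {η : ℝ} (hη0 : 0 < η) (m : ℕ) :
    ∑ j ∈ range m, (η + 1) * ((j : ℝ) + 1) ^ η ≤ ((m : ℝ) + 1) ^ (η + 1) := by
  induction m with
  | zero => simp
  | succ m ih =>
    rw [Finset.sum_range_succ]
    have ha : (0:ℝ) < (m:ℝ) + 1 := by positivity
    have key : ((m:ℝ) + 1) ^ (η+1) + (η + 1) * ((m : ℝ) + 1) ^ η ≤ ((m : ℝ) + 2) ^ (η+1) := by
      have hs : (-1:ℝ) ≤ 1/((m:ℝ)+1) := by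
        have : (0:ℝ) ≤ 1/((m:ℝ)+1) := by positivity
        linarith
      have hb := one_add_mul_self_le_rpow_one_add hs (p := η + 1) (by linarith)
      have hmul := mul_le_mul_of_nonneg_right hb (Real.rpow_pos_of_pos ha (η+1)).le
      have h1 : (1 + 1/((m:ℝ)+1)) ^ (η+1) * ((m:ℝ)+1)^(η+1) = ((m:ℝ)+2)^(η+1) := by
        rw [← Real.mul_rpow (by positivity) ha.le]
        congr 1
        field_simp
        ring
      have h2 : (1 + (η+1)*(1/((m:ℝ)+1))) * ((m:ℝ)+1)^(η+1)
          = ((m:ℝ)+1)^(η+1) + (η+1)*((m:ℝ)+1)^η := by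
        rw [Real.rpow_add_one (ne_of_gt ha)]
        field_simp
      rw [h1, h2] at hmul
      linarith
    have hcast : ((m:ℝ)+1+1) = (m:ℝ)+2 := by ring
    push_cast
    rw [hcast]
    linarith

lemma descent_step {n : ℕ} (f : EuclideanSpace ℝ (Fin n) → ℝ) (L η : ℝ)
    (hconv : ConvexOn ℝ Set.univ f) (hL : 0 < L) (hη0 : 0 < η)
    (hsmooth : HolderSmooth L η f)
    (x g y : EuclideanSpace ℝ (Fin n)) (hg : g ∈ SubdiffAt f x)
    (N : ℕ) (hN : 0 < N) :
    f y ≤ f x + (inner ℝ g (y - x) : ℝ)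
      + (L / (η + 1)) * ‖y - x‖ ^ (η + 1) * (((N:ℝ) + 1) / N) ^ (η + 1) := by
  set D := y - x with hD
  set d := (N:ℝ)⁻¹ • D with hd
  have hNne : ((N:ℝ)) ≠ 0 := Nat.cast_ne_zero.mpr hN.ne'
  choose G hG using fun k : ℕ => subdiff_nonempty f hconv (x + (k:ℝ) • d)
  -- per step bound
  have key : ∀ k : ℕ, f (x + ((k:ℝ) + 1) • d) ≤ f (x + (k:ℝ) • d)
      + (inner ℝ g d : ℝ) + L * (((k:ℝ) + 1) * ‖d‖) ^ η * ‖d‖ := by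
    intro k
    have hz : (x + (k:ℝ) • d) - (x + ((k:ℝ) + 1) • d) = -d := by
      rw [add_smul, one_smul]; abel
    have hsub := hG (k + 1)
    have h1 := hsub (x + (k:ℝ) • d)
    push_cast at h1
    rw [hz] at h1
    -- h1 : f (x + (k+1)•d) + ⟪G (k+1), -d⟫ ≤ f (x + k•d)
    have h2 : (inner ℝ (G (k+1)) (-d) : ℝ) = -(inner ℝ (G (k+1)) d : ℝ) := by
      rw [inner_neg_right]
    have h3 : (inner ℝ (G (k+1)) d : ℝ) = (inner ℝ g d : ℝ) + (inner ℝ (G (k+1) - g) d : ℝ) := by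
      rw [inner_sub_left]; ring
    have h4 : (inner ℝ (G (k+1) - g) d : ℝ) ≤ ‖G (k+1) - g‖ * ‖d‖ := real_inner_le_norm _ _
    have h5 : ‖G (k+1) - g‖ ≤ L * ‖(x + ((k:ℕ)+1:ℝ) • d) - x‖ ^ η := by
      have := hsmooth _ x _ g (hG (k+1)) hg
      push_cast at this
      exact this
    have h6 : ‖(x + ((k:ℕ)+1:ℝ) • d) - x‖ = ((k:ℝ) + 1) * ‖d‖ := by
      rw [add_sub_cancel_left, norm_smul]
      simp [abs_of_nonneg (by positivity : (0:ℝ) ≤ (k:ℝ)+1)]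
    rw [h6] at h5
    have hdnn : (0:ℝ) ≤ ‖d‖ := norm_nonneg _
    nlinarith [mul_le_mul_of_nonneg_right h5 hdnn]
  -- telescoping
  have tel : ∀ m : ℕ, f (x + (m:ℝ) • d) ≤ f x + (m:ℝ) * (inner ℝ g d : ℝ)
      + L * ‖d‖ * ∑ j ∈ Finset.range m, (((j:ℝ) + 1) * ‖d‖) ^ η := by
    intro m
    induction m with
    | zero => simp
    | succ m ih =>
      have := key m
      rw [Finset.sum_range_succ]
      push_cast
      have hnn : (0:ℝ) ≤ (((m:ℝ) + 1) * ‖d‖) ^ η := by positivity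
      nlinarith [this, ih]
  have hyx : x + ((N:ℕ):ℝ) • d = y := by
    rw [hd, smul_smul, mul_inv_cancel₀ hNne, one_smul, hD]; abel
  have := tel N
  rw [hyx] at this
  -- now simplify RHS
  have hinner : ((N:ℝ)) * (inner ℝ g d : ℝ) = (inner ℝ g D : ℝ) := by
    rw [hd, real_inner_smul_right]
    field_simp
  have hnormd : ‖d‖ = ‖D‖ / N := by
    rw [hd, norm_smul]
    simp [abs_of_nonneg (by positivity : (0:ℝ) ≤ (N:ℝ)⁻¹), div_eq_inv_mul]
  have hsum : ∑ j ∈ Finset.range N, (((j:ℝ) + 1) * ‖d‖) ^ η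
      ≤ (((N:ℝ) + 1) ^ (η+1) / (η + 1)) * ‖d‖ ^ η := by
    have h7 : ∀ j ∈ Finset.range N, (((j:ℝ) + 1) * ‖d‖) ^ η = ((j:ℝ)+1) ^ η * ‖d‖ ^ η := by
      intro j _
      rw [Real.mul_rpow (by positivity) (norm_nonneg _)]
    rw [Finset.sum_congr rfl h7, ← Finset.sum_mul]
    have h8 := bern_sum hη0 N
    have h9 : ∑ j ∈ Finset.range N, ((j:ℝ)+1) ^ η ≤ ((N:ℝ) + 1) ^ (η+1) / (η + 1) := by
      rw [le_div_iff₀ (by linarith)]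
      calc (∑ j ∈ Finset.range N, ((j:ℝ)+1) ^ η) * (η + 1)
          = ∑ j ∈ Finset.range N, (η + 1) * ((j:ℝ)+1) ^ η := by
            rw [Finset.sum_mul]; exact Finset.sum_congr rfl fun j _ => by ring
        _ ≤ _ := h8
    exact mul_le_mul_of_nonneg_right h9 (by positivity)
  have hN1 : (0:ℝ) < (N:ℝ) := by positivity
  have hfinal : L * ‖d‖ * ((((N:ℝ) + 1) ^ (η+1) / (η + 1)) * ‖d‖ ^ η)
      = (L / (η + 1)) * ‖D‖ ^ (η + 1) * (((N:ℝ) + 1) / N) ^ (η + 1) := by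
    rcases eq_or_ne ‖D‖ 0 with h0 | h0
    · rw [hnormd, h0]
      simp [Real.zero_rpow hη0.ne', Real.zero_rpow (by linarith : η + 1 ≠ 0)]
    · rw [hnormd, Real.div_rpow (norm_nonneg _) (Nat.cast_nonneg N),
        Real.div_rpow (by positivity) (Nat.cast_nonneg N),
        Real.rpow_add_one h0 η, Real.rpow_add_one hNne η]
      have hNp : ((N:ℝ)) ^ (η+1) ≠ 0 := by positivity
      field_simp
  have hmono := mul_le_mul_of_nonneg_left hsum (by positivity : (0:ℝ) ≤ L * ‖d‖)
  rw [hinner] at this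
  linarith [this, hmono, hfinal.le, hfinal.ge]

open Filter Topology in
lemma descent {n : ℕ} (f : EuclideanSpace ℝ (Fin n) → ℝ) (L η : ℝ)
    (hconv : ConvexOn ℝ Set.univ f) (hL : 0 < L) (hη0 : 0 < η)
    (hsmooth : HolderSmooth L η f)
    (x g y : EuclideanSpace ℝ (Fin n)) (hg : g ∈ SubdiffAt f x) :
    f y ≤ f x + (inner ℝ g (y - x) : ℝ) + (L / (η + 1)) * ‖y - x‖ ^ (η + 1) := by
  have h1 : Tendsto (fun N : ℕ => ((N:ℝ) + 1) / N) atTop (𝓝 1) := by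
    have h2 : Tendsto (fun N : ℕ => 1 + 1 / (N:ℝ)) atTop (𝓝 (1 + 0)) :=
      tendsto_const_nhds.add tendsto_one_div_atTop_nhds_zero_nat
    rw [add_zero] at h2
    refine h2.congr' ?_
    filter_upwards [eventually_gt_atTop 0] with N hN
    have : ((N:ℝ)) ≠ 0 := Nat.cast_ne_zero.mpr hN.ne'
    field_simp
  have h3 : Tendsto (fun N : ℕ => (((N:ℝ) + 1) / N) ^ (η + 1)) atTop (𝓝 1) := by
    have := (Real.continuousAt_rpow_const 1 (η + 1) (Or.inl one_ne_zero)).tendsto.comp h1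
    simpa [Real.one_rpow, Function.comp_def] using this
  have h4 : Tendsto (fun N : ℕ => f x + (inner ℝ g (y - x) : ℝ)
      + (L / (η + 1)) * ‖y - x‖ ^ (η + 1) * (((N:ℝ) + 1) / N) ^ (η + 1)) atTop
      (𝓝 (f x + (inner ℝ g (y - x) : ℝ) + (L / (η + 1)) * ‖y - x‖ ^ (η + 1) * 1)) :=
    tendsto_const_nhds.add ((h3.const_mul _))
  rw [mul_one] at h4
  refine ge_of_tendsto h4 ?_
  filter_upwards [eventually_gt_atTop 0] with N hN
  exact descent_step f L η hconv hL hη0 hsmooth x g y hg N hN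

/-- dual uniform-convexity lower bound on the Fenchel conjugate. -/
theorem fenchel_dual_lower_bound {n : ℕ} (f : EuclideanSpace ℝ (Fin n) → ℝ) (L η : ℝ)
    (hconv : ConvexOn ℝ Set.univ f)
    (hL : 0 < L) (hη0 : 0 < η) (hη1 : η ≤ 1)
    (hsmooth : HolderSmooth L η f)
    (x g : EuclideanSpace ℝ (Fin n)) (hg : g ∈ SubdiffAt f x) :
    fenchel f g = (((inner ℝ g x : ℝ) - f x : ℝ) : EReal) ∧
    ∀ g' : EuclideanSpace ℝ (Fin n),
      ((((inner ℝ g x : ℝ) - f x) + (inner ℝ x (g' - g) : ℝ)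
          + (η / ((η + 1) * L ^ (1 / η))) * ‖g' - g‖ ^ ((η + 1) / η) : ℝ) : EReal)
        ≤ fenchel f g' := by
  constructor
  · refine le_antisymm (iSup_le fun z => ?_) (le_iSup (fun z => (((inner ℝ g z : ℝ) - f z : ℝ) : EReal)) x)
    rw [EReal.coe_le_coe_iff]
    have h1 := hg z
    rw [inner_sub_right] at h1
    linarith
  · intro g'
    rcases eq_or_ne (g' - g) 0 with h0 | h0
    · have hgg : g' = g := by rwa [sub_eq_zero] at h0
      rw [h0]
      have hr : (‖(0 : EuclideanSpace ℝ (Fin n))‖ : ℝ) = 0 := norm_zero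
      rw [hr, Real.zero_rpow (by positivity : (η + 1) / η ≠ 0), inner_zero_right]
      simp only [mul_zero, add_zero, hgg]
      exact le_iSup (fun z => (((inner ℝ g z : ℝ) - f z : ℝ) : EReal)) x
    · set r : ℝ := ‖g' - g‖ with hrdef
      have hr : 0 < r := norm_pos_iff.mpr h0
      set s : ℝ := (r / L) ^ (1 / η) with hsdef
      have hs : 0 < s := Real.rpow_pos_of_pos (by positivity) _
      set t : ℝ := s / r with htdef
      set y : EuclideanSpace ℝ (Fin n) := x + t • (g' - g) with hydef
      have hd := descent f L η hconv hL hη0 hsmooth x g y hg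
      have hyx : y - x = t • (g' - g) := by rw [hydef]; abel
      have hnyx : ‖y - x‖ = s := by
        rw [hyx, norm_smul, Real.norm_eq_abs, abs_of_pos (by positivity), ← hrdef, htdef]
        field_simp
      -- inner ℝ products
      have hi1 : (inner ℝ g' y : ℝ) = (inner ℝ g' x : ℝ) + t * (inner ℝ g' (g' - g) : ℝ) := by
        rw [hydef, inner_add_right, real_inner_smul_right]
      have hi2 : (inner ℝ g (y - x) : ℝ) = t * (inner ℝ g (g' - g) : ℝ) := by
        rw [hyx, real_inner_smul_right]
      have hi3 : (inner ℝ g' x : ℝ) = (inner ℝ g x : ℝ) + (inner ℝ x (g' - g) : ℝ) := by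
        rw [real_inner_comm (g' - g) x, inner_sub_left]; ring
      have hi4 : (inner ℝ g' (g' - g) : ℝ) - (inner ℝ g (g' - g) : ℝ) = r ^ 2 := by
        rw [← inner_sub_left, real_inner_self_eq_norm_sq, ← hrdef]
      -- key algebra
      have hcalc : t * r ^ 2 - (L / (η + 1)) * s ^ (η + 1)
          = (η / ((η + 1) * L ^ (1 / η))) * r ^ ((η + 1) / η) := by
        have hq1 : (1 / η) + 1 = (η + 1) / η := by field_simp <;> ring
        have hsr : s = r ^ (1/η) / L ^ (1/η) := by
          rw [hsdef, Real.div_rpow hr.le hL.le]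
        have h5 : t * r ^ 2 = r ^ ((η+1)/η) / L ^ (1/η) := by
          rw [htdef, hsr, ← hq1, Real.rpow_add_one hr.ne']
          have hLq : (0:ℝ) < L ^ (1/η) := Real.rpow_pos_of_pos hL _
          field_simp <;> ring
        have h6 : s ^ (η + 1) = r ^ ((η+1)/η) / L ^ ((η+1)/η) := by
          have he : (1/η) * (η+1) = (η+1)/η := by ring
          rw [hsdef, ← Real.rpow_mul (by positivity : (0:ℝ) ≤ r / L), he,
            Real.div_rpow hr.le hL.le]
        rw [h5, h6, ← hq1, Real.rpow_add_one hL.ne']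
        have hLq : (0:ℝ) < L ^ (1/η) := Real.rpow_pos_of_pos hL _
        field_simp
        ring
      have hreal : ((inner ℝ g x : ℝ) - f x) + (inner ℝ x (g' - g) : ℝ)
          + (η / ((η + 1) * L ^ (1 / η))) * r ^ ((η + 1) / η)
          ≤ (inner ℝ g' y : ℝ) - f y := by
        rw [hnyx] at hd
        have hi6 : (inner ℝ g' y : ℝ) - (inner ℝ g (y - x) : ℝ)
            = (inner ℝ g x : ℝ) + (inner ℝ x (g' - g) : ℝ) + t * r ^ 2 := by
          rw [hi1, hi2, hi3, ← hi4]; ring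
        linarith [hd, hi6, hcalc]
      calc ((((inner ℝ g x : ℝ) - f x) + (inner ℝ x (g' - g) : ℝ)
          + (η / ((η + 1) * L ^ (1 / η))) * ‖g' - g‖ ^ ((η + 1) / η) : ℝ) : EReal)
          ≤ (((inner ℝ g' y : ℝ) - f y : ℝ) : EReal) := by
            rw [EReal.coe_le_coe_iff]; exact hreal
        _ ≤ fenchel f g' := le_iSup (fun z => (((inner ℝ g' z : ℝ) - f z : ℝ) : EReal)) y

end
end

section
/- Let f : ℝⁿ → ℝ be convex with minimizer x_*, suppose every subgradient g ∈ ∂f(x) at every x satisfies ‖g‖ ≤ L for some L > 0, and suppose f has sharp growth: f(x) ≥ f(x_*) + α‖x − x_*‖ for all x, with α > 0. Let (x_k) be generated by the Polyak subgradient method from x_0 and let 0 < ε ≤ f(x_0) − f(x_*). Then there exists an index k ≤ (4L²/α²)·⌈log₂((f(x_0) − f(x_*))/ε)⌉ with f(x_k) − f(x_*) ≤ ε. -/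
noncomputable section
open Classical

/-- `(x, g)` is a trajectory of the Polyak subgradient method for `f` with minimizer value
`f xs`: each `g k` is a subgradient at `x k` and the Polyak step is taken
(staying put when the subgradient is zero). -/
def PolyakSeq {n : ℕ} (f : EuclideanSpace ℝ (Fin n) → ℝ) (xs : EuclideanSpace ℝ (Fin n))
    (x g : ℕ → EuclideanSpace ℝ (Fin n)) : Prop :=
  (∀ k, g k ∈ SubdiffAt f (x k)) ∧
  ∀ k, x (k + 1) =
    if g k = 0 then x k else x k - ((f (x k) - f xs) / ‖g k‖ ^ 2) • g k

/-- under sharp growth, the Polyak subgradient method finds an ε-minimizer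
within (4L²/α²)·⌈log₂((f(x₀) − f(x_*))/ε)⌉ iterations. -/
theorem polyak_sharp_rate {n : ℕ} (f : EuclideanSpace ℝ (Fin n) → ℝ) (L α : ℝ)
    (xs : EuclideanSpace ℝ (Fin n)) (x g : ℕ → EuclideanSpace ℝ (Fin n))
    (hconv : ConvexOn ℝ Set.univ f)
    (hmin : ∀ y, f xs ≤ f y)
    (hL : 0 < L)
    (hgL : ∀ (z v : EuclideanSpace ℝ (Fin n)), v ∈ SubdiffAt f z → ‖v‖ ≤ L)
    (hα : 0 < α)
    (hsharp : ∀ y, f xs + α * ‖y - xs‖ ≤ f y)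
    (hseq : PolyakSeq f xs x g)
    (ε : ℝ) (hε : 0 < ε) (hεle : ε ≤ f (x 0) - f xs) :
    ∃ k : ℕ, (k : ℝ) ≤ (4 * L ^ 2 / α ^ 2) * (⌈Real.logb 2 ((f (x 0) - f xs) / ε)⌉ : ℝ) ∧
      f (x k) - f xs ≤ ε := by
  obtain ⟨hsub, hrec⟩ := hseq
  set c : ℝ := 4 * L ^ 2 / α ^ 2 with hc
  have hcpos : 0 < c := by positivity
  set F : ℕ → ℝ := fun k => f (x k) - f xs with hFdef
  have hF0 : ∀ k, 0 ≤ F k := fun k => sub_nonneg.2 (hmin _)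
  -- subgradient inequality gives F k ≤ ⟨g k, x k - xs⟩
  have hkey0 : ∀ k, F k ≤ (inner ℝ (g k) (x k - xs) : ℝ) := by
    intro k
    have h := hsub k xs
    have : (inner ℝ (g k) (xs - x k) : ℝ) = - (inner ℝ (g k) (x k - xs) : ℝ) := by
      rw [← inner_neg_right]; congr 1; abel
    simp only [hFdef]; linarith [h, this.symm ▸ h]
  -- F k ≤ α⁻¹ * F k bounds distance
  have hdist : ∀ k, ‖x k - xs‖ ≤ F k / α := by
    intro k
    have := hsharp (x k)
    rw [le_div_iff₀ hα, mul_comm]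
    simp only [hFdef]; linarith
  clear_value F c
  -- one step decrease
  have key : ∀ k, ‖x (k+1) - xs‖ ^ 2 ≤ ‖x k - xs‖ ^ 2 - (F k) ^ 2 / L ^ 2 := by
    intro k
    by_cases hg : g k = 0
    · have hx : x (k+1) = x k := by rw [hrec k, if_pos hg]
      have hFk : F k = 0 := by
        have h := hkey0 k
        rw [hg] at h
        simp at h
        exact le_antisymm h (hF0 k)
      rw [hx, hFk]
      simp
    · have hx : x (k+1) = x k - ((F k) / ‖g k‖ ^ 2) • g k := by
        rw [hrec k, if_neg hg]
        simp only [hFdef]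
      have hgn : (0:ℝ) < ‖g k‖ := norm_pos_iff.2 hg
      have hgn2 : (0:ℝ) < ‖g k‖ ^ 2 := by positivity
      set ρ : ℝ := F k / ‖g k‖ ^ 2 with hρ
      clear_value ρ
      have hexp : ‖x (k+1) - xs‖ ^ 2
          = ‖x k - xs‖ ^ 2 - 2 * ρ * (inner ℝ (g k) (x k - xs) : ℝ) + ρ ^ 2 * ‖g k‖ ^ 2 := by
        have hxx : x (k+1) - xs = (x k - xs) - ρ • g k := by rw [hx]; abel
        rw [hxx, norm_sub_sq_real, real_inner_smul_right, norm_smul,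
          real_inner_comm, mul_pow, Real.norm_eq_abs, sq_abs]
        ring
      have hbound : 2 * ρ * (inner ℝ (g k) (x k - xs) : ℝ) ≥ 2 * ρ * F k := by
        have hρ0 : 0 ≤ ρ := by rw [hρ]; exact div_nonneg (hF0 k) hgn2.le
        have := hkey0 k
        nlinarith
      have hρg : ρ ^ 2 * ‖g k‖ ^ 2 = F k ^ 2 / ‖g k‖ ^ 2 := by
        rw [hρ]; field_simp
      have hρF : 2 * ρ * F k = 2 * (F k ^ 2 / ‖g k‖ ^ 2) := by
        rw [hρ]; field_simp
      have hLg : F k ^ 2 / L ^ 2 ≤ F k ^ 2 / ‖g k‖ ^ 2 := by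
        apply div_le_div_of_nonneg_left (by positivity) hgn2
        have := hgL (x k) (g k) (hsub k)
        nlinarith
      rw [hexp]
      linarith [hbound, hρg, hρF, hLg]
  -- telescoping
  have tele : ∀ k T : ℕ, (Finset.range T).sum (fun j => (F (k+j)) ^ 2 / L ^ 2)
      ≤ ‖x k - xs‖ ^ 2 - ‖x (k+T) - xs‖ ^ 2 := by
    intro k T
    induction T with
    | zero => simp
    | succ T ih =>
      rw [Finset.sum_range_succ]
      have := key (k + T)
      have : ‖x (k + T + 1) - xs‖ ^ 2 ≤ ‖x (k + T) - xs‖ ^ 2 - (F (k+T)) ^ 2 / L ^ 2 :=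
        key (k + T)
      have hT1 : k + (T + 1) = k + T + 1 := by ring
      rw [hT1]
      linarith
  -- phase lemma
  have phase : ∀ k : ℕ, ∃ j : ℕ, k ≤ j ∧ (j : ℝ) ≤ (k : ℝ) + c ∧ F j ≤ F k / 2 := by
    intro k
    rcases eq_or_lt_of_le (hF0 k) with hFk | hFk
    · exact ⟨k, le_refl k, by linarith [hcpos], by linarith [hFk.symm]⟩
    by_contra hcon
    push_neg at hcon
    set T : ℕ := ⌈c⌉₊ with hT
    have hT1 : 1 ≤ T := Nat.one_le_iff_ne_zero.2 (by
      simp only [hT, ne_eq, Nat.ceil_eq_zero, not_le]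
      exact hcpos)
    have hTc : c ≤ (T : ℝ) := Nat.le_ceil c
    have hTc1 : (T : ℝ) < c + 1 := Nat.ceil_lt_add_one (le_of_lt hcpos)
    -- all entries in window are > F k / 2
    have hbig : ∀ i ∈ Finset.range T, F k / 2 < F (k + i) := by
      intro i hi
      rw [Finset.mem_range] at hi
      apply hcon (k + i) (Nat.le_add_right k i)
      push_cast
      have : (i : ℝ) ≤ (T : ℝ) - 1 := by
        have : (i : ℝ) + 1 ≤ (T : ℝ) := by exact_mod_cast Nat.succ_le_of_lt hi
        linarith
      linarith
    have hsumlow : (T : ℝ) * ((F k / 2) ^ 2 / L ^ 2)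
        < (Finset.range T).sum (fun j => (F (k+j)) ^ 2 / L ^ 2) := by
      have := Finset.sum_lt_sum_of_nonempty (s := Finset.range T)
        (f := fun _ => (F k / 2) ^ 2 / L ^ 2) (g := fun j => (F (k+j)) ^ 2 / L ^ 2)
        (by simp; omega)
        (by
          intro i hi
          have h1 := hbig i hi
          have h2 : 0 ≤ F k / 2 := by linarith
          have hL2 : (0:ℝ) < L ^ 2 := by positivity
          rw [div_lt_div_iff₀ hL2 hL2]
          have h3 : (F k / 2) ^ 2 < F (k + i) ^ 2 := by nlinarith
          nlinarith [mul_lt_mul_of_pos_right h3 hL2])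
      simpa [Finset.sum_const, Finset.card_range, nsmul_eq_mul] using this
    have hsumup : (Finset.range T).sum (fun j => (F (k+j)) ^ 2 / L ^ 2)
        ≤ (F k) ^ 2 / α ^ 2 := by
      have h1 := tele k T
      have h2 : ‖x k - xs‖ ^ 2 ≤ (F k / α) ^ 2 := by
        have := hdist k
        nlinarith [norm_nonneg (x k - xs)]
      have h3 : (0:ℝ) ≤ ‖x (k + T) - xs‖ ^ 2 := by positivity
      have : (F k / α) ^ 2 = (F k) ^ 2 / α ^ 2 := by ring
      linarith [this ▸ h2]
    have hlow : (F k) ^ 2 / α ^ 2 ≤ (T : ℝ) * ((F k / 2) ^ 2 / L ^ 2) := by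
      have hxeq : c * ((F k / 2) ^ 2 / L ^ 2) = (F k) ^ 2 / α ^ 2 := by
        rw [hc]; field_simp; ring
      have hpos : 0 ≤ (F k / 2) ^ 2 / L ^ 2 := by positivity
      have := mul_le_mul_of_nonneg_right hTc hpos
      linarith
    linarith
  -- iterate phases
  have iter : ∀ m : ℕ, ∃ k : ℕ, (k : ℝ) ≤ (m : ℝ) * c ∧ F k ≤ F 0 / 2 ^ m := by
    intro m
    induction m with
    | zero => exact ⟨0, by simp, by simp⟩
    | succ m ih =>
      obtain ⟨k, hk1, hk2⟩ := ih
      obtain ⟨j, _, hj2, hj3⟩ := phase k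
      refine ⟨j, ?_, ?_⟩
      · push_cast
        have hring : ((m:ℝ) + 1) * c = (m:ℝ) * c + c := by ring
        linarith
      · rw [pow_succ]
        rw [div_mul_eq_div_div]
        linarith
  -- conclude
  set r : ℝ := (f (x 0) - f xs) / ε with hr
  have hr1 : 1 ≤ r := (one_le_div hε).2 hεle
  clear_value r
  have hlogb : 0 ≤ Real.logb 2 r := Real.logb_nonneg (by norm_num) hr1
  have hceil0 : 0 ≤ ⌈Real.logb 2 r⌉ := Int.ceil_nonneg hlogb
  set m : ℕ := (⌈Real.logb 2 r⌉).toNat with hm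
  clear_value m
  have hmcast : (m : ℝ) = (⌈Real.logb 2 r⌉ : ℝ) := by
    rw [hm]
    exact_mod_cast Int.toNat_of_nonneg hceil0
  obtain ⟨k, hk1, hk2⟩ := iter m
  refine ⟨k, ?_, ?_⟩
  · rw [← hmcast]; linarith [hk1]
  · -- F 0 / 2 ^ m ≤ ε
    have hm1 : Real.logb 2 r ≤ (m : ℝ) := by
      rw [hmcast]; exact Int.le_ceil _
    have h2m : r ≤ 2 ^ m := by
      have := Real.rpow_le_rpow_of_exponent_le (by norm_num : (1:ℝ) ≤ 2) hm1
      rw [Real.rpow_logb (by norm_num) (by norm_num) (by linarith)] at this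
      rwa [Real.rpow_natCast] at this
    have hF0r : F 0 = r * ε := by
      simp only [hFdef, hr]
      rw [div_mul_cancel₀ _ (ne_of_gt hε)]
    have h2pos : (0:ℝ) < 2 ^ m := by positivity
    have hF0e : F 0 ≤ ε * 2 ^ m := by
      rw [hF0r]
      calc r * ε ≤ 2 ^ m * ε := mul_le_mul_of_nonneg_right h2m hε.le
        _ = ε * 2 ^ m := by ring
    have : F 0 / 2 ^ m ≤ ε := by
      rw [div_le_iff₀ h2pos]
      linarith
    have : F k ≤ ε := hk2.trans this
    simp only [hFdef] at this
    exact this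
end
end

section
/- Let f : ℝⁿ → ℝ be convex with minimizer x_*, suppose every subgradient g ∈ ∂f(x) at every x satisfies ‖g‖ ≤ L for some L > 0, suppose f has sharp growth f(x) ≥ f(x_*) + α‖x − x_*‖ for all x with α > 0, and suppose f(x_0) > f(x_*). Let (x_k) be generated by the Polyak subgradient method from x_0. Then there exists an index k ≤ 4L²/α² with f(x_k) − f(x_*) ≤ (f(x_0) − f(x_*))/2. -/
set_option maxHeartbeats 1000000


noncomputable section
open Classical

/-- under sharp growth, the Polyak subgradient method halves the objective gap
within 4L²/α² iterations. -/
theorem polyak_sharp_halving {n : ℕ} (f : EuclideanSpace ℝ (Fin n) → ℝ) (L α : ℝ)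
    (xs : EuclideanSpace ℝ (Fin n)) (x g : ℕ → EuclideanSpace ℝ (Fin n))
    (hconv : ConvexOn ℝ Set.univ f)
    (hmin : ∀ y, f xs ≤ f y)
    (hL : 0 < L)
    (hgL : ∀ (z v : EuclideanSpace ℝ (Fin n)), v ∈ SubdiffAt f z → ‖v‖ ≤ L)
    (hα : 0 < α)
    (hsharp : ∀ y, f xs + α * ‖y - xs‖ ≤ f y)
    (hgap : f xs < f (x 0))
    (hseq : PolyakSeq f xs x g) :
    ∃ k : ℕ, (k : ℝ) ≤ 4 * L ^ 2 / α ^ 2 ∧ f (x k) - f xs ≤ (f (x 0) - f xs) / 2 := by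
  by_contra hcon
  push_neg at hcon
  obtain ⟨hsub, hstep⟩ := hseq
  set D := f (x 0) - f xs with hD
  have hD0 : 0 < D := by simp [hD]; linarith
  have hnonneg : (0:ℝ) ≤ 4 * L ^ 2 / α ^ 2 := by positivity
  set K := Nat.floor (4 * L ^ 2 / α ^ 2) with hK
  have hKle : (K : ℝ) ≤ 4 * L ^ 2 / α ^ 2 := Nat.floor_le hnonneg
  have hKgt : 4 * L ^ 2 / α ^ 2 < (K:ℝ) + 1 := Nat.lt_floor_add_one _
  have hL2 : (0:ℝ) < L ^ 2 := by positivity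
  have hgapk : ∀ k ≤ K, D / 2 < f (x k) - f xs := by
    intro k hk
    have : (k:ℝ) ≤ 4 * L ^ 2 / α ^ 2 :=
      le_trans (by exact_mod_cast Nat.cast_le.mpr hk) hKle
    exact hcon k this
  -- one-step descent for k ≤ K
  have hdesc : ∀ k ≤ K,
      ‖x (k+1) - xs‖^2 ≤ ‖x k - xs‖^2 - (D^2/4) / L^2 := by
    intro k hk
    set Δ := f (x k) - f xs with hΔdef
    have hΔ : D / 2 < Δ := hgapk k hk
    have hΔ0 : 0 < Δ := by linarith
    have hg0 : g k ≠ 0 := by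
      intro h0
      have := hsub k xs
      rw [h0] at this
      simp [SubdiffAt] at this
      linarith
    have hgn : 0 < ‖g k‖ := norm_pos_iff.mpr hg0
    have hgn2 : 0 < ‖g k‖ ^ 2 := by positivity
    have hgle : ‖g k‖ ≤ L := hgL (x k) (g k) (hsub k)
    have hgle2 : ‖g k‖ ^ 2 ≤ L ^ 2 := by nlinarith
    have hx1 : x (k+1) = x k - (Δ / ‖g k‖ ^ 2) • g k := by
      rw [hstep k, if_neg hg0]
    -- subgradient inequality at xs
    have hin : Δ ≤ (inner ℝ (g k) (x k - xs) : ℝ) := by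
      have h := hsub k xs
      have : (inner ℝ (g k) (xs - x k) : ℝ) = - (inner ℝ (g k) (x k - xs) : ℝ) := by
        rw [← inner_neg_right]; congr 1; abel
      rw [this] at h
      linarith
    set ρ := Δ / ‖g k‖ ^ 2 with hρ
    have hρpos : 0 < ρ := by positivity
    have hexp : ‖x (k+1) - xs‖^2
        = ‖x k - xs‖^2 - 2 * ρ * (inner ℝ (g k) (x k - xs) : ℝ) + ρ^2 * ‖g k‖^2 := by
      have : x (k+1) - xs = (x k - xs) - ρ • g k := by rw [hx1]; abel
      rw [this, @norm_sub_sq_real, real_inner_smul_right, norm_smul]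
      rw [real_inner_comm]
      simp [abs_of_pos hρpos]
      ring
    have key : ‖x (k+1) - xs‖^2 ≤ ‖x k - xs‖^2 - Δ^2 / ‖g k‖^2 := by
      rw [hexp]
      have h1 : ρ^2 * ‖g k‖^2 = ρ * Δ := by
        rw [hρ]; field_simp
      have h2 : ρ * Δ = Δ^2 / ‖g k‖^2 := by rw [hρ]; field_simp
      have hmul : ρ * Δ ≤ ρ * (inner ℝ (g k) (x k - xs) : ℝ) :=
        mul_le_mul_of_nonneg_left hin (le_of_lt hρpos)
      nlinarith [hmul, h1, h2]
    have hmono : (D^2/4) / L^2 ≤ Δ^2 / ‖g k‖^2 := by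
      have h1 : D^2/4 ≤ Δ^2 := by
        have := pow_le_pow_left₀ (by positivity : (0:ℝ) ≤ D/2) (le_of_lt hΔ) 2
        calc D^2/4 = (D/2)^2 := by ring
          _ ≤ Δ^2 := this
      calc (D^2/4) / L^2 ≤ Δ^2 / L^2 := by gcongr
        _ ≤ Δ^2 / ‖g k‖^2 := by
            exact div_le_div_of_nonneg_left (by positivity) hgn2 hgle2
    linarith
  -- telescoping
  have hchain : ∀ m, m ≤ K + 1 →
      ‖x m - xs‖^2 ≤ ‖x 0 - xs‖^2 - (m:ℝ) * ((D^2/4) / L^2) := by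
    intro m
    induction m with
    | zero => intro _; simp
    | succ m ih =>
      intro hm
      have hmK : m ≤ K := Nat.lt_succ_iff.mp hm
      have h1 := hdesc m hmK
      have h2 := ih (le_trans (Nat.le_succ m) hm)
      push_cast
      nlinarith
  -- initial distance bound
  have hα2 : (0:ℝ) < α^2 := by positivity
  have hx0 : α * ‖x 0 - xs‖ ≤ D := by
    have := hsharp (x 0); simp only [hD]; linarith
  have hx02 : ‖x 0 - xs‖^2 ≤ D^2 / α^2 := by
    rw [le_div_iff₀ hα2]
    have hh : 0 ≤ (D - α*‖x 0 - xs‖) * (D + α*‖x 0 - xs‖) := by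
      apply mul_nonneg (by linarith)
      have := mul_nonneg hα.le (norm_nonneg (x 0 - xs))
      linarith
    nlinarith [hh]
  have hfinal := hchain (K+1) le_rfl
  have h0 : (0:ℝ) ≤ ‖x (K+1) - xs‖^2 := sq_nonneg _
  push_cast at hfinal
  -- derive contradiction
  have hDL : 0 < (D^2/4) / L^2 := by positivity
  have hKgt' : 4 * L^2 / α^2 * ((D^2/4)/L^2) < ((K:ℝ)+1) * ((D^2/4)/L^2) :=
    mul_lt_mul_of_pos_right hKgt hDL
  have heq : 4 * L^2 / α^2 * ((D^2/4)/L^2) = D^2/α^2 := by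
    field_simp
  nlinarith

end
end

section
/- Let f : ℝⁿ → ℝ be convex with minimizer x_* and suppose every subgradient g ∈ ∂f(x) at every x satisfies ‖g‖ ≤ L for some L > 0. Let (x_k) be generated by the Polyak subgradient method from x_0. Then for any ε > 0 there exists an index k ≤ 8L²‖x_0 − x_*‖²/ε² with f(x_k) − f(x_*) ≤ ε. -/
noncomputable section
open Classical

/-- for L-Lipschitz convex f, the Polyak subgradient method finds an
ε-minimizer within 8L²‖x₀ − x_*‖²/ε² iterations. -/
theorem polyak_general_rate {n : ℕ} (f : EuclideanSpace ℝ (Fin n) → ℝ) (L : ℝ)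
    (xs : EuclideanSpace ℝ (Fin n)) (x g : ℕ → EuclideanSpace ℝ (Fin n))
    (hconv : ConvexOn ℝ Set.univ f)
    (hmin : ∀ y, f xs ≤ f y)
    (hL : 0 < L)
    (hgL : ∀ (z v : EuclideanSpace ℝ (Fin n)), v ∈ SubdiffAt f z → ‖v‖ ≤ L)
    (hseq : PolyakSeq f xs x g)
    (ε : ℝ) (hε : 0 < ε) :
    ∃ k : ℕ, (k : ℝ) ≤ 8 * L ^ 2 * ‖x 0 - xs‖ ^ 2 / ε ^ 2 ∧ f (x k) - f xs ≤ ε := by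
  obtain ⟨hsub, hstep⟩ := hseq
  by_contra hcon
  push_neg at hcon
  set R := ‖x 0 - xs‖ with hR
  set B := 8 * L ^ 2 * R ^ 2 / ε ^ 2 with hB
  have hBpos : 0 ≤ B := by positivity
  set N := ⌊B⌋₊ with hN
  have hgap : ∀ k ≤ N, ε < f (x k) - f xs := by
    intro k hk
    exact (hcon k (le_trans (Nat.cast_le.2 hk) (Nat.floor_le hBpos)))
  have hgne : ∀ k ≤ N, g k ≠ 0 := by
    intro k hk h0
    have h := hsub k xs
    rw [h0] at h
    simp only [inner_zero_left, add_zero] at h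
    linarith [hgap k hk]
  have key : ∀ k ≤ N, ‖x (k+1) - xs‖^2 ≤ ‖x k - xs‖^2 - ε^2 / L^2 := by
    intro k hk
    have hg0 := hgne k hk
    have hgapk := hgap k hk
    have hgnorm : 0 < ‖g k‖ := norm_pos_iff.2 hg0
    have hgLk : ‖g k‖ ≤ L := hgL (x k) (g k) (hsub k)
    set Δ := f (x k) - f xs with hΔ
    have hΔpos : 0 < Δ := lt_trans hε hgapk
    have hinner : Δ ≤ inner ℝ (g k) (x k - xs) := by
      have h := hsub k xs
      have heq : (inner ℝ (g k) (xs - x k) : ℝ) = - inner ℝ (g k) (x k - xs) := by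
        rw [← inner_neg_right]
        congr 1
        abel
      rw [heq] at h
      linarith
    set ρ := Δ / ‖g k‖^2 with hρ
    have hρpos : 0 < ρ := by positivity
    have hx1 : x (k+1) - xs = (x k - xs) - ρ • g k := by
      rw [hstep k, if_neg hg0]
      abel
    rw [hx1, norm_sub_sq_real, real_inner_smul_right, norm_smul, mul_pow,
      Real.norm_eq_abs, sq_abs]
    have hcomm : (inner ℝ (x k - xs) (g k) : ℝ) = inner ℝ (g k) (x k - xs) :=
      real_inner_comm _ _
    rw [hcomm]
    have h1 : ρ * Δ ≤ ρ * inner ℝ (g k) (x k - xs) :=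
      mul_le_mul_of_nonneg_left hinner hρpos.le
    have h2 : ρ * Δ = Δ^2 / ‖g k‖^2 := by
      rw [hρ]; ring
    have h3 : ρ^2 * ‖g k‖^2 = Δ^2 / ‖g k‖^2 := by
      rw [hρ]
      field_simp
    have h4 : ε^2 / L^2 ≤ Δ^2 / ‖g k‖^2 := by
      apply div_le_div₀ (sq_nonneg Δ)
      · nlinarith
      · positivity
      · nlinarith
    nlinarith [h1, h2, h3, h4]
  have hdec : ∀ k, k ≤ N + 1 → ‖x k - xs‖^2 ≤ R^2 - k * (ε^2 / L^2) := by
    intro k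
    induction k with
    | zero => intro _; simp [hR]
    | succ m ih =>
      intro hm
      have hmN : m ≤ N := Nat.lt_succ_iff.mp hm
      have h1 := ih (le_trans (Nat.le_succ m) hm)
      have h2 := key m hmN
      push_cast
      push_cast at h1
      linarith
  have h0 := hdec (N+1) le_rfl
  have hnn : (0:ℝ) ≤ ‖x (N+1) - xs‖^2 := sq_nonneg _
  have hfloor : B < (N:ℝ) + 1 := by
    exact_mod_cast Nat.lt_floor_add_one B
  rw [hB, div_lt_iff₀ (by positivity : (0:ℝ) < ε^2)] at hfloor
  have hL2 : (0:ℝ) < L^2 := by positivity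
  have h5 : ((N:ℝ)+1) * ε^2 ≤ R^2 * L^2 := by
    have : ((N:ℝ)+1) * (ε^2 / L^2) ≤ R^2 := by push_cast at h0 ⊢; linarith
    rw [div_eq_mul_inv, ← mul_assoc] at this
    calc ((N:ℝ)+1) * ε^2 = ((N:ℝ)+1) * ε^2 * (L^2)⁻¹ * L^2 := by field_simp
    _ ≤ R^2 * L^2 := by nlinarith
  nlinarith [sq_nonneg (L*R)]

end
end
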